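/- The pair (U, φₓ) is compatible with the x-flux of the 2D Euler equations: at every admissible state q, the gradient of U times the Jacobian of f equals the gradient of φₓ, i.e., (∇U(q))ᵀ · (∂f/∂q)(q) = (∇φₓ(q))ᵀ. -/

import Mathlib

open Real Matrix

noncomputable section

/-- A state of the 2D compressible Euler equations: `(ρ, ρu, ρv, E)`. -/
abbrev EulerState := Fin 4 → ℝ

/-- Density. -/
def rho (q : EulerState) : ℝ := q 0
/-- x-momentum. -/
def mom1 (q : EulerState) : ℝ := q 1
/-- y-momentum. -/
def mom2 (q : EulerState) : ℝ := q 2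
/-- Total energy. -/
def toten (q : EulerState) : ℝ := q 3
/-- Pressure `p = (γ-1)(E - (m₁² + m₂²)/(2ρ))`. -/
def pres (γ : ℝ) (q : EulerState) : ℝ :=
  (γ - 1) * (toten q - (mom1 q ^ 2 + mom2 q ^ 2) / (2 * rho q))
/-- x-velocity `u = m₁/ρ`. -/
def uvel (q : EulerState) : ℝ := mom1 q / rho q
/-- y-velocity `v = m₂/ρ`. -/
def vvel (q : EulerState) : ℝ := mom2 q / rho q
/-- Admissible states: positive density and positive pressure. -/
def admissible (γ : ℝ) (q : EulerState) : Prop := 0 < rho q ∧ 0 < pres γ q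
/-- Physical entropy `s = ln(p ρ^(-γ))`. -/
def entS (γ : ℝ) (q : EulerState) : ℝ := Real.log (pres γ q * rho q ^ (-γ))
/-- Entropy function `U = -ρ s/(γ-1)`. -/
def entU (γ : ℝ) (q : EulerState) : ℝ := -(rho q * entS γ q) / (γ - 1)
/-- `β = ρ/(2p)`. -/
def betaCoef (γ : ℝ) (q : EulerState) : ℝ := rho q / (2 * pres γ q)
/-- Entropy variables `r(q)`. -/
def entVar (γ : ℝ) (q : EulerState) : EulerState :=
  ![(γ - entS γ q) / (γ - 1) - betaCoef γ q * (uvel q ^ 2 + vvel q ^ 2),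
    2 * betaCoef γ q * uvel q,
    2 * betaCoef γ q * vvel q,
    -2 * betaCoef γ q]
/-- x-flux `f(q)`. -/
def fFlux (γ : ℝ) (q : EulerState) : EulerState :=
  ![rho q * uvel q,
    rho q * uvel q ^ 2 + pres γ q,
    rho q * uvel q * vvel q,
    (toten q + pres γ q) * uvel q]
/-- y-flux `g(q)`. -/
def gFlux (γ : ℝ) (q : EulerState) : EulerState :=
  ![rho q * vvel q,
    rho q * uvel q * vvel q,
    rho q * vvel q ^ 2 + pres γ q,
    (toten q + pres γ q) * vvel q]
/-- x-entropy flux `φₓ = -ρ u s/(γ-1)`. -/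
def phiX (γ : ℝ) (q : EulerState) : ℝ := -(rho q * uvel q * entS γ q) / (γ - 1)
/-- y-entropy flux `φ_y = -ρ v s/(γ-1)`. -/
def phiY (γ : ℝ) (q : EulerState) : ℝ := -(rho q * vvel q * entS γ q) / (γ - 1)

/-- Logarithmic mean `(b-a)/(ln b - ln a)`, equal to `a` when `a = b`. -/
def logMean (a b : ℝ) : ℝ := if a = b then a else (b - a) / (Real.log b - Real.log a)

/-- The entropy conservative flux of Chandrashekar. -/
def chandrashekarFlux (γ : ℝ) (qm qp : EulerState) : EulerState :=
  let ρhat := logMean (rho qm) (rho qp)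
  let ubar := (uvel qm + uvel qp) / 2
  let vbar := (vvel qm + vvel qp) / 2
  let βbar := (betaCoef γ qm + betaCoef γ qp) / 2
  let βhat := logMean (betaCoef γ qm) (betaCoef γ qp)
  let ρbar := (rho qm + rho qp) / 2
  let ptil := ρbar / (2 * βbar)
  let vsqbar := (uvel qm ^ 2 + vvel qm ^ 2 + uvel qp ^ 2 + vvel qp ^ 2) / 2
  let Fρ := ρhat * ubar
  let Fρu := ubar * Fρ + ptil
  let Fρv := vbar * Fρ
  ![Fρ, Fρu, Fρv,
    (1 / (2 * (γ - 1) * βhat) - vsqbar / 2) * Fρ + ubar * Fρu + vbar * Fρv]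

/-- Speed of sound `c = √(γ p/ρ)`. -/
def cSound (γ : ℝ) (q : EulerState) : ℝ := Real.sqrt (γ * pres γ q / rho q)
/-- Enthalpy `H = c²/(γ-1) + |v|²/2`. -/
def enthalpyH (γ : ℝ) (q : EulerState) : ℝ :=
  cSound γ q ^ 2 / (γ - 1) + (uvel q ^ 2 + vvel q ^ 2) / 2
/-- The matrix `R` of right eigenvectors of the x-flux Jacobian. -/
def eigMat (γ : ℝ) (q : EulerState) : Matrix (Fin 4) (Fin 4) ℝ :=
  !![1, 1, 0, 1;
     uvel q - cSound γ q, uvel q, 0, uvel q + cSound γ q;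
     vvel q, vvel q, -1, vvel q;
     enthalpyH γ q - cSound γ q * uvel q, (uvel q ^ 2 + vvel q ^ 2) / 2, -vvel q,
       enthalpyH γ q + cSound γ q * uvel q]
/-- Barth's scaling matrix `S = diag(ρ/(2γ), (γ-1)ρ/γ, p, ρ/(2γ))`. -/
def scalMat (γ : ℝ) (q : EulerState) : Matrix (Fin 4) (Fin 4) ℝ :=
  Matrix.diagonal ![rho q / (2 * γ), (γ - 1) * rho q / γ, pres γ q, rho q / (2 * γ)]

/-- Entropy diffusion matrix `Q = R |Λ| S Rᵀ` for a diagonal `|Λ| = diag lam`. -/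
def Qmat (γ : ℝ) (lam : Fin 4 → ℝ) (q : EulerState) : Matrix (Fin 4) (Fin 4) ℝ :=
  eigMat γ q * Matrix.diagonal lam * scalMat γ q * (eigMat γ q)ᵀ

/-- Roe eigenvalues `(|u-c|, |u|, |u|, |u+c|)`. -/
def lamRoe (γ : ℝ) (q : EulerState) : Fin 4 → ℝ :=
  ![|uvel q - cSound γ q|, |uvel q|, |uvel q|, |uvel q + cSound γ q|]
/-- Kinetic energy stable eigenvalues `(|u|+c, |u|, |u|, |u|+c)`. -/
def lamKES (γ : ℝ) (q : EulerState) : Fin 4 → ℝ :=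
  ![|uvel q| + cSound γ q, |uvel q|, |uvel q|, |uvel q| + cSound γ q]
/-- Local Mach number `M = |v|/c`. -/
def machNum (γ : ℝ) (q : EulerState) : ℝ :=
  Real.sqrt (uvel q ^ 2 + vvel q ^ 2) / cSound γ q
/-- Rescaled speed of sound `c̃ = c max(min(M,1), M_cut)`. -/
def cTilde (γ Mcut : ℝ) (q : EulerState) : ℝ :=
  cSound γ q * max (min (machNum γ q) 1) Mcut
/-- Low Mach Roe eigenvalues `(|u-c̃|, |u|, |u|, |u+c̃|)`. -/
def lamRoeLM (γ Mcut : ℝ) (q : EulerState) : Fin 4 → ℝ :=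
  ![|uvel q - cTilde γ Mcut q|, |uvel q|, |uvel q|, |uvel q + cTilde γ Mcut q|]
/-- Low Mach KES eigenvalues `(|u|+c̃, |u|, |u|, |u|+c̃)`. -/
def lamKESLM (γ Mcut : ℝ) (q : EulerState) : Fin 4 → ℝ :=
  ![|uvel q| + cTilde γ Mcut q, |uvel q|, |uvel q|, |uvel q| + cTilde γ Mcut q]

namespace EulerAux

/-- Directional derivative of pressure along `w`. -/
def Pd (γ : ℝ) (q w : EulerState) : ℝ :=
  (γ - 1) * (w 3 - (q 1 * w 1 + q 2 * w 2) / q 0 + (q 1 ^ 2 + q 2 ^ 2) * w 0 / (2 * q 0 ^ 2))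

/-- Directional derivative of entropy `s` along `w`. -/
def Sd (γ : ℝ) (q w : EulerState) : ℝ := Pd γ q w / pres γ q - γ * w 0 / q 0

/-- Directional derivative of the x-flux along `w`. -/
def Fd (γ : ℝ) (q w : EulerState) : Fin 4 → ℝ :=
  ![w 1,
    2 * (q 1 / q 0) * w 1 - (q 1 / q 0) ^ 2 * w 0 + Pd γ q w,
    (w 1 * q 2 + q 1 * w 2) / q 0 - q 1 * q 2 * w 0 / q 0 ^ 2,
    (w 3 + Pd γ q w) * (q 1 / q 0) + (q 3 + pres γ q) * ((w 1 * q 0 - q 1 * w 0) / q 0 ^ 2)]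

/-- Directional derivative of `phiX` along `w`. -/
def Phid (γ : ℝ) (q w : EulerState) : ℝ :=
  -((w 0 * (q 1 / q 0) + q 0 * ((w 1 * q 0 - q 1 * w 0) / q 0 ^ 2)) * entS γ q
      + q 0 * (q 1 / q 0) * Sd γ q w) / (γ - 1)

/-- Directional derivative of `entU` along `w`. -/
def Ud (γ : ℝ) (q w : EulerState) : ℝ :=
  -(w 0 * entS γ q + q 0 * Sd γ q w) / (γ - 1)

lemma lineval (q w : EulerState) (i : Fin 4) :
    HasDerivAt (fun t : ℝ => q i + t * w i) (w i) 0 := by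
  simpa using ((hasDerivAt_id (0 : ℝ)).mul_const (w i)).const_add (q i)

lemma hasDerivAt_pres (γ : ℝ) (q w : EulerState) (hρ : 0 < q 0) :
    HasDerivAt (fun t : ℝ => pres γ (q + t • w)) (Pd γ q w) 0 := by
  have hne : 2 * (q 0 + 0 * w 0) ≠ 0 := by
    simpa using mul_ne_zero two_ne_zero hρ.ne'
  have H := ((lineval q w 3).sub
      ((((lineval q w 1).pow 2).add ((lineval q w 2).pow 2)).div
        ((lineval q w 0).const_mul 2) hne)).const_mul (γ - 1)
  have hfun : (fun t : ℝ => pres γ (q + t • w))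
      = fun t : ℝ => (γ - 1) * ((q 3 + t * w 3)
          - ((q 1 + t * w 1) ^ 2 + (q 2 + t * w 2) ^ 2) / (2 * (q 0 + t * w 0))) := by
    funext t; rfl
  rw [hfun]
  refine H.congr_deriv ?_
  simp only [Pi.mul_apply, Pi.add_apply, Pi.sub_apply, Pi.pow_apply, Pi.div_apply]
  simp only [zero_mul, add_zero, mul_zero, pow_one]
  unfold Pd
  field_simp
  ring

lemma hasDerivAt_entS (γ : ℝ) (q w : EulerState) (hρ : 0 < q 0) (hp : 0 < pres γ q) :
    HasDerivAt (fun t : ℝ => entS γ (q + t • w)) (Sd γ q w) 0 := by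
  have hq0 : q + (0 : ℝ) • w = q := by simp
  have hne0 : q 0 + 0 * w 0 ≠ 0 := by simpa using hρ.ne'
  have hR := (lineval q w 0).rpow_const (p := -γ) (Or.inl hne0)
  have hPR := (hasDerivAt_pres γ q w hρ).mul hR
  have hprod : pres γ (q + (0 : ℝ) • w) * (q 0 + 0 * w 0) ^ (-γ) ≠ 0 := by
    rw [hq0]
    simp only [zero_mul, add_zero]
    exact mul_ne_zero hp.ne' (Real.rpow_pos_of_pos hρ _).ne'
  have H := hPR.log hprod
  have hfun : (fun t : ℝ => entS γ (q + t • w))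
      = fun t : ℝ => Real.log (pres γ (q + t • w) * (q 0 + t * w 0) ^ (-γ)) := by
    funext t; rfl
  rw [hfun]
  refine H.congr_deriv ?_
  simp only [Pi.mul_apply, Pi.add_apply, Pi.sub_apply, Pi.pow_apply, Pi.div_apply]
  rw [hq0]
  simp only [zero_mul, add_zero]
  rw [Real.rpow_sub hρ, Real.rpow_one]
  unfold Sd
  field_simp
  ring

lemma hasDerivAt_entU_line (γ : ℝ) (q w : EulerState) (hρ : 0 < q 0) (hp : 0 < pres γ q) :
    HasDerivAt (fun t : ℝ => entU γ (q + t • w)) (Ud γ q w) 0 := by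
  have hq0 : q + (0 : ℝ) • w = q := by simp
  have H := (((lineval q w 0).mul (hasDerivAt_entS γ q w hρ hp)).neg).div_const (γ - 1)
  have hfun : (fun t : ℝ => entU γ (q + t • w))
      = fun t : ℝ => -((q 0 + t * w 0) * entS γ (q + t • w)) / (γ - 1) := by
    funext t; rfl
  rw [hfun]
  refine H.congr_deriv ?_
  rw [hq0]
  simp only [Ud, zero_mul, add_zero]

lemma hasDerivAt_phiX_line (γ : ℝ) (q w : EulerState) (hρ : 0 < q 0) (hp : 0 < pres γ q) :
    HasDerivAt (fun t : ℝ => phiX γ (q + t • w)) (Phid γ q w) 0 := by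
  have hq0 : q + (0 : ℝ) • w = q := by simp
  have hne0 : q 0 + 0 * w 0 ≠ 0 := by simpa using hρ.ne'
  have hu := (lineval q w 1).div (lineval q w 0) hne0
  have H := ((((lineval q w 0).mul hu).mul (hasDerivAt_entS γ q w hρ hp)).neg).div_const (γ - 1)
  have hfun : (fun t : ℝ => phiX γ (q + t • w))
      = fun t : ℝ => -(((q 0 + t * w 0) * ((q 1 + t * w 1) / (q 0 + t * w 0)))
          * entS γ (q + t • w)) / (γ - 1) := by
    funext t; rfl
  rw [hfun]
  refine H.congr_deriv ?_
  simp only [Pi.mul_apply, Pi.add_apply, Pi.sub_apply, Pi.pow_apply, Pi.div_apply]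
  rw [hq0]
  simp only [Phid, zero_mul, add_zero]

lemma hasDerivAt_fFlux_line (γ : ℝ) (q w : EulerState) (hρ : 0 < q 0) (i : Fin 4) :
    HasDerivAt (fun t : ℝ => fFlux γ (q + t • w) i) (Fd γ q w i) 0 := by
  have hq0 : q + (0 : ℝ) • w = q := by simp
  have hne0 : q 0 + 0 * w 0 ≠ 0 := by simpa using hρ.ne'
  have hu := (lineval q w 1).div (lineval q w 0) hne0
  have hv := (lineval q w 2).div (lineval q w 0) hne0
  fin_cases i
  · have H := (lineval q w 0).mul hu
    have hfun : (fun t : ℝ => fFlux γ (q + t • w) 0)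
        = fun t : ℝ => (q 0 + t * w 0) * ((q 1 + t * w 1) / (q 0 + t * w 0)) := by
      funext t; rfl
    rw [show (⟨0, by norm_num⟩ : Fin 4) = 0 from rfl, hfun]
    refine H.congr_deriv ?_
    simp only [Pi.mul_apply, Pi.add_apply, Pi.sub_apply, Pi.pow_apply, Pi.div_apply]
    simp only [Fd, Matrix.cons_val_zero, zero_mul, add_zero]
    field_simp
    ring
  · have H := ((lineval q w 0).mul (hu.pow 2)).add (hasDerivAt_pres γ q w hρ)
    have hfun : (fun t : ℝ => fFlux γ (q + t • w) 1)
        = fun t : ℝ => (q 0 + t * w 0) * ((q 1 + t * w 1) / (q 0 + t * w 0)) ^ 2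
            + pres γ (q + t • w) := by
      funext t; rfl
    rw [show (⟨1, by norm_num⟩ : Fin 4) = 1 from rfl, hfun]
    refine H.congr_deriv ?_
    simp only [Pi.mul_apply, Pi.add_apply, Pi.sub_apply, Pi.pow_apply, Pi.div_apply]
    simp only [Fd, Matrix.cons_val_one, Matrix.head_cons, Matrix.cons_val_zero, zero_mul, add_zero, Nat.reduceSub, pow_one]
    field_simp [hρ.ne']
    ring
  · have H := ((lineval q w 0).mul hu).mul hv
    have hfun : (fun t : ℝ => fFlux γ (q + t • w) 2)
        = fun t : ℝ => (q 0 + t * w 0) * ((q 1 + t * w 1) / (q 0 + t * w 0))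
            * ((q 2 + t * w 2) / (q 0 + t * w 0)) := by
      funext t; rfl
    rw [show (⟨2, by norm_num⟩ : Fin 4) = 2 from rfl, hfun]
    refine H.congr_deriv ?_
    simp only [Pi.mul_apply, Pi.add_apply, Pi.sub_apply, Pi.pow_apply, Pi.div_apply]
    simp only [Fd, Matrix.cons_val_two, Matrix.tail_cons, Matrix.head_cons, zero_mul, add_zero]
    field_simp
    ring
  · have H := ((lineval q w 3).add (hasDerivAt_pres γ q w hρ)).mul hu
    have hfun : (fun t : ℝ => fFlux γ (q + t • w) 3)
        = fun t : ℝ => ((q 3 + t * w 3) + pres γ (q + t • w))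
            * ((q 1 + t * w 1) / (q 0 + t * w 0)) := by
      funext t; rfl
    rw [show (⟨3, by norm_num⟩ : Fin 4) = 3 from rfl, hfun]
    refine H.congr_deriv ?_
    simp only [Pi.mul_apply, Pi.add_apply, Pi.sub_apply, Pi.pow_apply, Pi.div_apply]
    rw [hq0]
    simp only [Fd, Matrix.cons_val_three, Matrix.tail_cons, Matrix.head_cons, zero_mul, add_zero]

lemma final_identity (γ : ℝ) (hγ : 1 < γ) (q w : EulerState)
    (hρ : 0 < q 0) (hp : 0 < pres γ q) :
    Phid γ q w = Ud γ q (Fd γ q w) := by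
  have hγ1 : γ - 1 ≠ 0 := sub_ne_zero.mpr hγ.ne'
  have hρ' : q 0 ≠ 0 := hρ.ne'
  have hPne : pres γ q ≠ 0 := hp.ne'
  have hPval : pres γ q = (γ - 1) * (q 3 - (q 1 ^ 2 + q 2 ^ 2) / (2 * q 0)) := rfl
  simp only [Phid, Ud, Sd, Pd, Fd, Matrix.cons_val_zero, Matrix.cons_val_one,
    Matrix.head_cons, Matrix.cons_val_two, Matrix.tail_cons, Matrix.cons_val_three]
  field_simp
  rw [hPval]
  field_simp
  ring

end EulerAux

/-- the entropy pair `(U, φₓ)` is compatible with the x-flux: at every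
admissible state, `U'(q) ∘ f'(q) = φₓ'(q)` (as linear maps, i.e. row-vector times
Jacobian equals the gradient of `φₓ`). -/
theorem entropy_pair_compatible_x (γ : ℝ) (hγ : 1 < γ) (q : EulerState)
    (hq : admissible γ q)
    (DU : EulerState →L[ℝ] ℝ) (Df : EulerState →L[ℝ] EulerState)
    (Dφ : EulerState →L[ℝ] ℝ)
    (hDU : HasFDerivAt (entU γ) DU q)
    (hDf : HasFDerivAt (fFlux γ) Df q)
    (hDφ : HasFDerivAt (phiX γ) Dφ q) :
    Dφ = DU.comp Df := by
  obtain ⟨hρ, hp⟩ := hq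
  have hρ0 : 0 < q 0 := hρ
  refine ContinuousLinearMap.ext fun w => ?_
  have hq0 : ∀ v : EulerState, q + (0 : ℝ) • v = q := fun v => by simp
  have hcw : ∀ v : EulerState, HasDerivAt (fun t : ℝ => q + t • v) v 0 := fun v => by
    simpa using ((hasDerivAt_id (0 : ℝ)).smul_const v).const_add q
  have hchain : ∀ (v : EulerState) (L : EulerState →L[ℝ] ℝ) (F : EulerState → ℝ),
      HasFDerivAt F L q → HasDerivAt (fun t : ℝ => F (q + t • v)) (L v) 0 := by
    intro v L F hF
    exact HasFDerivAt.comp_hasDerivAt 0 ((hq0 v).symm ▸ hF) (hcw v)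
  have hφ : Dφ w = EulerAux.Phid γ q w :=
    (hchain w Dφ (phiX γ) hDφ).unique (EulerAux.hasDerivAt_phiX_line γ q w hρ0 hp)
  have hfchain : HasDerivAt (fun t : ℝ => fFlux γ (q + t • w)) (Df w) 0 := by
    have := HasFDerivAt.comp_hasDerivAt 0 ((hq0 w).symm ▸ hDf) (hcw w)
    exact this
  have hDfw : Df w = EulerAux.Fd γ q w := by
    funext i
    have hi : HasDerivAt (fun t : ℝ => fFlux γ (q + t • w) i) (Df w i) 0 :=
      (hasDerivAt_pi.mp hfchain) i
    exact hi.unique (EulerAux.hasDerivAt_fFlux_line γ q w hρ0 i)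
  have hU : DU (Df w) = EulerAux.Ud γ q (Df w) :=
    (hchain (Df w) DU (entU γ) hDU).unique
      (EulerAux.hasDerivAt_entU_line γ q (Df w) hρ0 hp)
  rw [ContinuousLinearMap.comp_apply, hφ, hU, hDfw]
  exact EulerAux.final_identity γ hγ q w hρ0 hp
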